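/- Let A be a commutative ring, and let B and C be commutative A-algebras. Assume B is a Noetherian unique factorization domain, C is flat and finitely generated as an A-algebra, and for every field K that is an A-algebra, the tensor product K ⊗_A C is a unique factorization domain whose units are exactly the images of the nonzero elements of K. If x ∈ B is a prime element and y ∈ B, then x divides y in B if and only if x ⊗ 1 divides y ⊗ 1 in B ⊗_A C. -/

import Mathlib

open TensorProduct

universe u

/-- Under the hypotheses of the UFD tensor product proposition, if `x ∈ B` is prime and `y ∈ B`,
then `x ∣ y` in `B` if and only if `x ⊗ 1 ∣ y ⊗ 1` in `B ⊗[A] C`. -/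
theorem dvd_iff_tmul_one_dvd (A B C : Type u) [CommRing A] [CommRing B] [CommRing C]
    [Algebra A B] [Algebra A C]
    [IsNoetherianRing B] [IsDomain B] [UniqueFactorizationMonoid B]
    [Module.Flat A C] [Algebra.FiniteType A C]
    (hdom : ∀ (K : Type u) [Field K] [Algebra A K], IsDomain (K ⊗[A] C))
    (hufd : ∀ (K : Type u) [Field K] [Algebra A K] [IsDomain (K ⊗[A] C)],
      UniqueFactorizationMonoid (K ⊗[A] C))
    (hunits : ∀ (K : Type u) [Field K] [Algebra A K] (z : K ⊗[A] C),
      IsUnit z ↔ ∃ c : K, c ≠ 0 ∧ algebraMap K (K ⊗[A] C) c = z)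
    (x : B) (hx : Prime x) (y : B) :
    x ∣ y ↔ (x ⊗ₜ[A] (1 : C)) ∣ (y ⊗ₜ[A] (1 : C)) := by
  constructor
  · rintro ⟨c, rfl⟩
    exact ⟨c ⊗ₜ 1, by rw [Algebra.TensorProduct.tmul_mul_tmul, one_mul]⟩
  · intro h
    haveI hIp : (Ideal.span {x}).IsPrime := (Ideal.span_singleton_prime hx.ne_zero).mpr hx
    let Q := B ⧸ Ideal.span {x}
    let K := FractionRing Q
    haveI hD := hdom K
    haveI : Nontrivial (K ⊗[A] C) := hD.toNontrivial
    let g : B →ₐ[A] K :=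
      (IsScalarTower.toAlgHom A Q K).comp (Ideal.Quotient.mkₐ A (Ideal.span {x}))
    let φ := Algebra.TensorProduct.map g (AlgHom.id A C)
    have hgx : g x = 0 := by
      have h1 : (Ideal.Quotient.mkₐ A (Ideal.span {x})) x = 0 := by
        rw [Ideal.Quotient.mkₐ_eq_mk, Ideal.Quotient.eq_zero_iff_mem]
        exact Ideal.mem_span_singleton_self x
      simp [g, h1]
    have hφx : φ (x ⊗ₜ[A] (1 : C)) = 0 := by
      simp [φ, hgx]
    have hφy : φ (y ⊗ₜ[A] (1 : C)) = 0 := by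
      obtain ⟨z, hz⟩ := h
      rw [hz, map_mul, hφx, zero_mul]
    have hty : g y ⊗ₜ[A] (1 : C) = 0 := by simpa [φ] using hφy
    have hgy : g y = 0 := by
      have hinj : Function.Injective (algebraMap K (K ⊗[A] C)) :=
        (algebraMap K (K ⊗[A] C)).injective
    -- algebraMap K (K ⊗ C) (g y) = g y ⊗ 1
      apply hinj
      rw [map_zero, Algebra.TensorProduct.algebraMap_apply]
      exact hty
    have hmk : (Ideal.Quotient.mk (Ideal.span {x})) y = 0 := by
      apply IsFractionRing.injective Q K
      rw [map_zero]
      exact hgy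
    exact Ideal.mem_span_singleton.mp (Ideal.Quotient.eq_zero_iff_mem.mp hmk)
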